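/- Let Γ be a group generated by a finite set S, amenable with a Følner sequence, and let (Γₙ) be a normal chain in Γ with trivial intersection. For each ε > 0 there exist k ∈ ℕ and a transversal T of Γₖ in Γ such that |TS \ T| < ε|T|. -/

import Mathlib

open Pointwise

section WeissAux
open Finset Pointwise

private lemma card_filter_prod_left {α β : Type*} [DecidableEq α] [DecidableEq β]
    (A : Finset α) (B : Finset β) (P : α × β → Prop) [DecidablePred P] :
    ((A ×ˢ B).filter P).card = ∑ a ∈ A, (B.filter fun b => P (a, b)).card := by
  rw [Finset.card_eq_sum_card_fiberwise (f := Prod.fst) (t := A)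
    (fun p hp => (Finset.mem_product.1 (Finset.mem_filter.1 hp).1).1)]
  refine Finset.sum_congr rfl fun a ha => ?_
  have he : ((A ×ˢ B).filter P).filter (fun p => p.1 = a)
      = (B.filter fun b => P (a, b)).image (fun b => (a, b)) := by
    ext p
    simp only [Finset.mem_filter, Finset.mem_product, Finset.mem_image]
    constructor
    · rintro ⟨⟨⟨h1, h2⟩, h3⟩, h4⟩
      subst h4
      exact ⟨p.2, ⟨h2, by rw [Prod.mk.eta]; exact h3⟩, Prod.mk.eta⟩
    · rintro ⟨b, ⟨hb, hP⟩, rfl⟩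
      exact ⟨⟨⟨ha, hb⟩, hP⟩, rfl⟩
  rw [he, Finset.card_image_of_injective _ (fun x y h => by simpa using h)]

private lemma card_filter_prod_right {α β : Type*} [DecidableEq α] [DecidableEq β]
    (A : Finset α) (B : Finset β) (P : α × β → Prop) [DecidablePred P] :
    ((A ×ˢ B).filter P).card = ∑ b ∈ B, (A.filter fun a => P (a, b)).card := by
  rw [Finset.card_eq_sum_card_fiberwise (f := Prod.snd) (t := B)
    (fun p hp => (Finset.mem_product.1 (Finset.mem_filter.1 hp).1).2)]
  refine Finset.sum_congr rfl fun b hb => ?_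
  have he : ((A ×ˢ B).filter P).filter (fun p => p.2 = b)
      = (A.filter fun a => P (a, b)).image (fun a => (a, b)) := by
    ext p
    simp only [Finset.mem_filter, Finset.mem_product, Finset.mem_image]
    constructor
    · rintro ⟨⟨⟨h1, h2⟩, h3⟩, h4⟩
      subst h4
      exact ⟨p.1, ⟨h1, by rw [Prod.mk.eta]; exact h3⟩, Prod.mk.eta⟩
    · rintro ⟨a, ⟨haA, hP⟩, rfl⟩
      exact ⟨⟨⟨haA, hb⟩, hP⟩, rfl⟩
  rw [he, Finset.card_image_of_injective _ (fun x y h => by simpa using h)]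

private lemma image_mul_sdiff {K : Type*} [Group K] [DecidableEq K] (c : K) (F W : Finset K) :
    (F.image (c * ·)) \ W = (F.filter fun f => c * f ∉ W).image (c * ·) := by
  ext x
  simp only [Finset.mem_sdiff, Finset.mem_image, Finset.mem_filter]
  constructor
  · rintro ⟨⟨f, hf, rfl⟩, hx⟩; exact ⟨f, ⟨hf, hx⟩, rfl⟩
  · rintro ⟨f, ⟨hf, hfx⟩, rfl⟩; exact ⟨⟨f, hf, rfl⟩, hfx⟩

private lemma image_mul_inter {K : Type*} [Group K] [DecidableEq K] (c : K) (F W : Finset K) :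
    (F.image (c * ·)) ∩ W = (F.filter fun f => c * f ∈ W).image (c * ·) := by
  ext x
  simp only [Finset.mem_inter, Finset.mem_image, Finset.mem_filter]
  constructor
  · rintro ⟨⟨f, hf, rfl⟩, hx⟩; exact ⟨f, ⟨hf, hx⟩, rfl⟩
  · rintro ⟨f, ⟨hf, hfx⟩, rfl⟩; exact ⟨⟨f, hf, rfl⟩, hfx⟩

private lemma card_image_mul {K : Type*} [Group K] [DecidableEq K] (c : K) (F : Finset K) :
    (F.image (c * ·)).card = F.card :=
  Finset.card_image_of_injective _ (mul_right_injective c)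

private lemma sum_translates {K : Type*} [Group K] [DecidableEq K] [Fintype K]
    (F X : Finset K) :
    (((Finset.univ : Finset K) ×ˢ F).filter fun p => p.1 * p.2 ∈ X).card
      = F.card * X.card := by
  rw [card_filter_prod_right]
  have : ∀ f ∈ F, ((Finset.univ : Finset K).filter fun c => c * f ∈ X).card = X.card := by
    intro f _
    have he : ((Finset.univ : Finset K).filter fun c => c * f ∈ X)
        = X.image (fun x => x * f⁻¹) := by
      ext c
      simp only [Finset.mem_filter, Finset.mem_univ, true_and, Finset.mem_image]
      constructor
      · intro h; exact ⟨c * f, h, by group⟩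
      · rintro ⟨x, hx, rfl⟩; simpa using hx
    rw [he, Finset.card_image_of_injective _ (fun x y h => by simpa using h)]
  rw [Finset.sum_congr rfl this, Finset.sum_const, smul_eq_mul]

variable {Γ K : Type*} [Group Γ] [DecidableEq Γ] [Group K] [DecidableEq K]

private lemma eta_transfer [Fintype K] (π : Γ →* K) (Hj F' : Finset Γ)
    (hinjH : ∀ a ∈ Hj, ∀ b ∈ Hj, π a = π b → a = b) :
    ((((Hj.image π) ×ˢ (F'.image π)).filter fun p => p.1 * p.2⁻¹ ∉ Hj.image π).card : ℕ)
      ≤ ((Hj ×ˢ F').filter fun p => p.1 * p.2⁻¹ ∉ Hj).card := by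
  classical
  have hlH : ∀ y ∈ Hj.image π, ∃ a, a ∈ Hj ∧ π a = y := by
    intro y hy; obtain ⟨a, ha, rfl⟩ := Finset.mem_image.1 hy; exact ⟨a, ha, rfl⟩
  have hlF : ∀ y ∈ F'.image π, ∃ a, a ∈ F' ∧ π a = y := by
    intro y hy; obtain ⟨a, ha, rfl⟩ := Finset.mem_image.1 hy; exact ⟨a, ha, rfl⟩
  set LH : K → Γ := fun y => if h : ∃ a, a ∈ Hj ∧ π a = y then h.choose else 1 with hLH
  set LF : K → Γ := fun y => if h : ∃ a, a ∈ F' ∧ π a = y then h.choose else 1 with hLF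
  have hLHspec : ∀ y ∈ Hj.image π, LH y ∈ Hj ∧ π (LH y) = y := by
    intro y hy
    have h := hlH y hy
    simp only [hLH, dif_pos h]
    exact h.choose_spec
  have hLFspec : ∀ y ∈ F'.image π, LF y ∈ F' ∧ π (LF y) = y := by
    intro y hy
    have h := hlF y hy
    simp only [hLF, dif_pos h]
    exact h.choose_spec
  apply Finset.card_le_card_of_injOn (fun p => (LH p.1, LF p.2))
  · intro p hp
    simp only [Finset.mem_coe, Finset.mem_filter, Finset.mem_product] at hp ⊢
    obtain ⟨⟨h1, h2⟩, h3⟩ := hp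
    obtain ⟨hm1, he1⟩ := hLHspec _ h1
    obtain ⟨hm2, he2⟩ := hLFspec _ h2
    refine ⟨⟨hm1, hm2⟩, fun hmem => h3 ?_⟩
    refine Finset.mem_image.2 ⟨LH p.1 * (LF p.2)⁻¹, hmem, ?_⟩
    rw [map_mul, map_inv, he1, he2]
  · intro p hp p' hp' heq
    simp only [Finset.mem_coe, Finset.mem_filter, Finset.mem_product] at hp hp'
    have e1 : LH p.1 = LH p'.1 := congrArg Prod.fst heq
    have e2 : LF p.2 = LF p'.2 := congrArg Prod.snd heq
    have := (hLHspec _ hp.1.1).2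
    have := (hLHspec _ hp'.1.1).2
    have := (hLFspec _ hp.1.2).2
    have := (hLFspec _ hp'.1.2).2
    have q1 : p.1 = p'.1 := by
      rw [← (hLHspec _ hp.1.1).2, ← (hLHspec _ hp'.1.1).2, e1]
    have q2 : p.2 = p'.2 := by
      rw [← (hLFspec _ hp.1.2).2, ← (hLFspec _ hp'.1.2).2, e2]
    exact Prod.ext q1 q2

variable [Fintype K]

private lemma tile_step (π : Γ →* K) (hsurj : Function.Surjective π) (S : Finset Γ)
    (Hj : Finset Γ)
    (hinj : ∀ a ∈ Hj, ∀ b ∈ Hj, π a = π b → a = b)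
    (W : Finset K) (σ : K → Γ) (hsec : ∀ q ∈ W, π (σ q) = q) (c : K) :
    ∃ (σ' : K → Γ) (D : Finset K),
      D = ((Hj.image π).image (c * ·)) \ W ∧
      Disjoint W D ∧
      (D.card + ((Hj.image π).filter fun f => c * f ∈ W).card = Hj.card) ∧
      (∀ q ∈ W ∪ D, π (σ' q) = q) ∧ (∀ q ∈ W, σ' q = σ q) ∧
      (((((W ∪ D) ×ˢ S).filter fun p =>
          ¬(p.1 * π p.2 ∈ W ∪ D ∧ σ' p.1 * p.2 = σ' (p.1 * π p.2))).card : ℕ)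
        ≤ ((W ×ˢ S).filter fun p =>
            ¬(p.1 * π p.2 ∈ W ∧ σ p.1 * p.2 = σ (p.1 * π p.2))).card
          + ((Hj ×ˢ S).filter fun p => p.1 * p.2 ∉ Hj).card
          + S.card * ((Hj.image π).filter fun f => c * f ∈ W).card) ∧
      (∀ Fb : Finset K,
        ((((Finset.univ \ (W ∪ D)) ×ˢ Fb).filter fun p => p.1 * p.2 ∈ W ∪ D).card : ℕ)
          ≤ (((Finset.univ \ W) ×ˢ Fb).filter fun p => p.1 * p.2 ∈ W).card
            + (((Hj.image π) ×ˢ Fb).filter fun p => p.1 * p.2⁻¹ ∉ Hj.image π).card) := by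
  classical
  set Hb : Finset K := Hj.image π with hHb
  have hlH : ∀ y ∈ Hb, ∃ a, a ∈ Hj ∧ π a = y := by
    intro y hy; obtain ⟨a, ha, rfl⟩ := Finset.mem_image.1 hy; exact ⟨a, ha, rfl⟩
  set L : K → Γ := fun y => if h : ∃ a, a ∈ Hj ∧ π a = y then h.choose else 1 with hL
  have hLspec : ∀ y ∈ Hb, L y ∈ Hj ∧ π (L y) = y := by
    intro y hy
    have h := hlH y hy
    simp only [hL, dif_pos h]
    exact h.choose_spec
  have hLinv : ∀ a ∈ Hj, L (π a) = a := by
    intro a ha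
    have hm : π a ∈ Hb := Finset.mem_image_of_mem _ ha
    exact hinj _ (hLspec _ hm).1 _ ha (hLspec _ hm).2
  obtain ⟨ch, hch⟩ := hsurj c
  set D : Finset K := (Hb.image (c * ·)) \ W with hD
  have hDmem : ∀ q, q ∈ D ↔ (c⁻¹ * q ∈ Hb ∧ q ∉ W) := by
    intro q
    simp only [hD, Finset.mem_sdiff, Finset.mem_image]
    constructor
    · rintro ⟨⟨f, hf, rfl⟩, hw⟩; simpa using ⟨hf, hw⟩
    · rintro ⟨hf, hw⟩; exact ⟨⟨c⁻¹ * q, hf, by group⟩, hw⟩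
  set σ' : K → Γ := fun q => if q ∈ D then ch * L (c⁻¹ * q) else σ q with hσ'
  have hdisj : Disjoint W D := by
    rw [hD]; exact Finset.disjoint_sdiff
  have hσW : ∀ q ∈ W, σ' q = σ q := by
    intro q hq
    have : q ∉ D := fun hqD => (Finset.disjoint_left.1 hdisj hq) hqD
    simp only [hσ', if_neg this]
  have hσD : ∀ q ∈ D, σ' q = ch * L (c⁻¹ * q) := by
    intro q hq; simp only [hσ', if_pos hq]
  have hsec' : ∀ q ∈ W ∪ D, π (σ' q) = q := by
    intro q hq
    rcases Finset.mem_union.1 hq with h | h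
    · rw [hσW q h]; exact hsec q h
    · rw [hσD q h, map_mul, hch, (hLspec _ ((hDmem q).1 h).1).2]
      group
  have hcard : D.card + (Hb.filter fun f => c * f ∈ W).card = Hj.card := by
    have h1 : D = (Hb.filter fun f => c * f ∉ W).image (c * ·) := by
      rw [hD]
      ext x
      simp only [Finset.mem_sdiff, Finset.mem_image, Finset.mem_filter]
      constructor
      · rintro ⟨⟨f, hf, rfl⟩, hx⟩; exact ⟨f, ⟨hf, hx⟩, rfl⟩
      · rintro ⟨f, ⟨hf, hfx⟩, rfl⟩; exact ⟨⟨f, hf, rfl⟩, hfx⟩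
    have h2 : D.card = (Hb.filter fun f => c * f ∉ W).card := by
      rw [h1]; exact Finset.card_image_of_injective _ (mul_right_injective c)
    have h3 : Hb.card = Hj.card := by
      rw [hHb]
      apply Finset.card_image_of_injOn
      intro a ha b hb hab
      exact hinj a ha b hb hab
    rw [h2, ← h3, add_comm]
    exact Finset.card_filter_add_card_filter_not _
  refine ⟨σ', D, hD, hdisj, hcard, hsec', hσW, ?_, ?_⟩
  · -- B count
    have hsplit : (W ∪ D) ×ˢ S = (W ×ˢ S) ∪ (D ×ˢ S) := Finset.union_product
    rw [hsplit, Finset.filter_union]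
    refine le_trans (Finset.card_union_le _ _) ?_
    have hWpart : (((W ×ˢ S).filter fun p =>
        ¬(p.1 * π p.2 ∈ W ∪ D ∧ σ' p.1 * p.2 = σ' (p.1 * π p.2))).card : ℕ)
        ≤ ((W ×ˢ S).filter fun p =>
            ¬(p.1 * π p.2 ∈ W ∧ σ p.1 * p.2 = σ (p.1 * π p.2))).card := by
      apply Finset.card_le_card
      intro p hp
      simp only [Finset.mem_filter] at hp ⊢
      obtain ⟨hmem, hbad⟩ := hp
      refine ⟨hmem, fun hgood => hbad ?_⟩
      obtain ⟨hin, heq⟩ := hgood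
      have hq : p.1 ∈ W := (Finset.mem_product.1 hmem).1
      refine ⟨Finset.mem_union_left _ hin, ?_⟩
      rw [hσW _ hq, hσW _ hin, heq]
    have hDpart : (((D ×ˢ S).filter fun p =>
        ¬(p.1 * π p.2 ∈ W ∪ D ∧ σ' p.1 * p.2 = σ' (p.1 * π p.2))).card : ℕ)
        ≤ ((Hj ×ˢ S).filter fun p => p.1 * p.2 ∉ Hj).card
          + S.card * (Hb.filter fun f => c * f ∈ W).card := by
      have hsub : ((D ×ˢ S).filter fun p =>
          ¬(p.1 * π p.2 ∈ W ∪ D ∧ σ' p.1 * p.2 = σ' (p.1 * π p.2)))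
          ⊆ ((D ×ˢ S).filter fun p => L (c⁻¹ * p.1) * p.2 ∉ Hj)
            ∪ ((D ×ˢ S).filter fun p =>
                L (c⁻¹ * p.1) * p.2 ∈ Hj ∧ c * π (L (c⁻¹ * p.1) * p.2) ∈ W) := by
        intro p hp
        simp only [Finset.mem_filter] at hp
        obtain ⟨hmem, hbad⟩ := hp
        have hq : p.1 ∈ D := (Finset.mem_product.1 hmem).1
        set f := L (c⁻¹ * p.1) with hf
        have hfH : f ∈ Hj := (hLspec _ ((hDmem p.1).1 hq).1).1
        have hfπ : π f = c⁻¹ * p.1 := (hLspec _ ((hDmem p.1).1 hq).1).2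
        simp only [Finset.mem_union, Finset.mem_filter]
        by_cases hfs : f * p.2 ∈ Hj
        · by_cases hw : c * π (f * p.2) ∈ W
          · exact Or.inr ⟨hmem, hfs, hw⟩
          · exfalso
            have hq'eq : p.1 * π p.2 = c * π (f * p.2) := by
              rw [map_mul, hfπ]; group
            have hinv : c⁻¹ * (c * π (f * p.2)) = π (f * p.2) := by group
            have hq'D : p.1 * π p.2 ∈ D := by
              refine (hDmem _).2 ⟨?_, ?_⟩
              · rw [hq'eq, hinv]
                exact Finset.mem_image_of_mem _ hfs
              · rw [hq'eq]; exact hw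
            apply hbad
            refine ⟨Finset.mem_union_right _ hq'D, ?_⟩
            rw [hσD _ hq, hσD _ hq'D, ← hf, hq'eq, hinv, hLinv _ hfs, mul_assoc]
        · exact Or.inl ⟨hmem, hfs⟩
      refine le_trans (Finset.card_le_card hsub) ?_
      refine le_trans (Finset.card_union_le _ _) ?_
      have hP1 : (((D ×ˢ S).filter fun p => L (c⁻¹ * p.1) * p.2 ∉ Hj).card : ℕ)
          ≤ ((Hj ×ˢ S).filter fun p => p.1 * p.2 ∉ Hj).card := by
        apply Finset.card_le_card_of_injOn (fun p => (L (c⁻¹ * p.1), p.2))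
        · intro p hp
          simp only [Finset.mem_coe, Finset.mem_filter, Finset.mem_product] at hp ⊢
          obtain ⟨⟨h1, h2⟩, h3⟩ := hp
          exact ⟨⟨(hLspec _ ((hDmem p.1).1 h1).1).1, h2⟩, h3⟩
        · intro p hp p' hp' heq
          simp only [Finset.mem_coe, Finset.mem_filter, Finset.mem_product] at hp hp'
          simp only [Prod.mk.injEq] at heq
          obtain ⟨e1, e2⟩ := heq
          have g1 : π (L (c⁻¹ * p.1)) = c⁻¹ * p.1 := (hLspec _ ((hDmem p.1).1 hp.1.1).1).2
          have g2 : π (L (c⁻¹ * p'.1)) = c⁻¹ * p'.1 := (hLspec _ ((hDmem p'.1).1 hp'.1.1).1).2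
          have hcc : c⁻¹ * p.1 = c⁻¹ * p'.1 := by rw [← g1, ← g2, e1]
          have q1 : p.1 = p'.1 := mul_left_cancel hcc
          exact Prod.ext q1 e2
      have hP2 : (((D ×ˢ S).filter fun p =>
          L (c⁻¹ * p.1) * p.2 ∈ Hj ∧ c * π (L (c⁻¹ * p.1) * p.2) ∈ W).card : ℕ)
          ≤ S.card * (Hb.filter fun f => c * f ∈ W).card := by
        rw [card_filter_prod_right]
        rw [← smul_eq_mul, ← Finset.sum_const]
        apply Finset.sum_le_sum
        intro s hs
        apply Finset.card_le_card_of_injOn (fun q => π (L (c⁻¹ * q) * s))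
        · intro q hq
          simp only [Finset.mem_coe, Finset.mem_filter] at hq ⊢
          obtain ⟨h1, h2, h3⟩ := hq
          exact ⟨Finset.mem_image_of_mem π h2, h3⟩
        · intro q hq q' hq' heq
          simp only [Finset.mem_coe, Finset.mem_filter] at hq hq'
          have h1 : L (c⁻¹ * q) * s ∈ Hj := hq.2.1
          have h1' : L (c⁻¹ * q') * s ∈ Hj := hq'.2.1
          have hee := hinj _ h1 _ h1' heq
          have hLL : L (c⁻¹ * q) = L (c⁻¹ * q') := mul_right_cancel hee
          have g1 : π (L (c⁻¹ * q)) = c⁻¹ * q := (hLspec _ ((hDmem q).1 hq.1).1).2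
          have g2 : π (L (c⁻¹ * q')) = c⁻¹ * q' := (hLspec _ ((hDmem q').1 hq'.1).1).2
          have hcc : c⁻¹ * q = c⁻¹ * q' := by rw [← g1, ← g2, hLL]
          exact mul_left_cancel hcc
      omega
    omega
  · -- b counts
    intro Fb
    have hsub : ((Finset.univ \ (W ∪ D)) ×ˢ Fb).filter (fun p => p.1 * p.2 ∈ W ∪ D)
        ⊆ (((Finset.univ \ (W ∪ D)) ×ˢ Fb).filter fun p => p.1 * p.2 ∈ W)
          ∪ (((Finset.univ \ (W ∪ D)) ×ˢ Fb).filter fun p => p.1 * p.2 ∈ D) := by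
      intro p hp
      simp only [Finset.mem_filter, Finset.mem_union] at hp ⊢
      tauto
    refine le_trans (Finset.card_le_card hsub) ?_
    refine le_trans (Finset.card_union_le _ _) ?_
    apply Nat.add_le_add
    · apply Finset.card_le_card
      intro p hp
      simp only [Finset.mem_filter, Finset.mem_product, Finset.mem_sdiff] at hp ⊢
      obtain ⟨⟨⟨-, h1⟩, h2⟩, h3⟩ := hp
      exact ⟨⟨⟨Finset.mem_univ _, fun hw => h1 (Finset.mem_union_left _ hw)⟩, h2⟩, h3⟩
    · apply Finset.card_le_card_of_injOn (fun p => (c⁻¹ * (p.1 * p.2), p.2))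
      · intro p hp
        simp only [Finset.mem_coe, Finset.mem_filter, Finset.mem_product, Finset.mem_sdiff] at hp ⊢
        obtain ⟨⟨⟨-, h1⟩, h2⟩, h3⟩ := hp
        have hin : c⁻¹ * (p.1 * p.2) ∈ Hb := ((hDmem _).1 h3).1
        refine ⟨⟨hin, h2⟩, fun hmem => ?_⟩
        have hx : c⁻¹ * p.1 ∈ Hb := by
          have hgg : c⁻¹ * (p.1 * p.2) * p.2⁻¹ = c⁻¹ * p.1 := by group
          rwa [hgg] at hmem
        rcases Classical.em (p.1 ∈ W) with hw | hw
        · exact h1 (Finset.mem_union_left _ hw)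
        · exact h1 (Finset.mem_union_right _ ((hDmem p.1).2 ⟨hx, hw⟩))
      · intro p hp p' hp' heq
        simp only [Prod.mk.injEq] at heq
        obtain ⟨e1, e2⟩ := heq
        rw [e2] at e1
        have q1 : p.1 = p'.1 := mul_right_cancel (mul_left_cancel e1)
        exact Prod.ext q1 e2

set_option maxHeartbeats 1600000 in
-- appended to all.lean later
private lemma weiss_master (π : Γ →* K) (hsurj : Function.Surjective π)
    (S : Finset Γ) (e : ℝ) (he0 : 0 < e) (he8 : e ≤ 1/8)
    (N : ℕ) (H : ℕ → Finset Γ)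
    (hne : ∀ t, t < N → (H t).Nonempty)
    (hinj : ∀ t, t < N → ∀ a ∈ H t, ∀ b ∈ H t, π a = π b → a = b)
    (hfolS : ∀ t, t < N → ∀ s ∈ S,
      (((H t).filter fun a => a * s ∉ H t).card : ℝ) ≤ e^4 * (H t).card)
    (hfolH : ∀ t t', t < t' → t' < N → ∀ g ∈ H t',
      (((H t).filter fun a => a * g⁻¹ ∉ H t).card : ℝ) ≤ e^4 * (H t).card)
    (hN : ((1 - e/2)^N : ℝ) < e) :
    ∃ σ : K → Γ, (∀ q, π (σ q) = q) ∧
      (((((Finset.univ : Finset K) ×ˢ S).filter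
          fun p => σ p.1 * p.2 ≠ σ (p.1 * π p.2)).card : ℝ)
        ≤ 5 * e * S.card * (Fintype.card K)) := by
  classical
  have he2 : (0:ℝ) < 1 - 2*e := by linarith
  have hScard : (0:ℝ) ≤ S.card := Nat.cast_nonneg _
  have hHcard : ∀ t, t < N → (1:ℝ) ≤ (H t).card := by
    intro t ht
    have := Finset.card_pos.2 (hne t ht)
    exact_mod_cast this
  -- per-stage bad-pair bounds
  have hbadS : ∀ j, j < N →
      ((((H j) ×ˢ S).filter fun p => p.1 * p.2 ∉ H j).card : ℝ)
        ≤ e^4 * S.card * (H j).card := by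
    intro j hj
    rw [card_filter_prod_right]
    push_cast
    calc (∑ s ∈ S, (((H j).filter fun a => a * s ∉ H j).card : ℝ))
        ≤ ∑ s ∈ S, e^4 * (H j).card := Finset.sum_le_sum (fun s hs => hfolS j hj s hs)
      _ = e^4 * S.card * (H j).card := by rw [Finset.sum_const, nsmul_eq_mul]; ring
  have hη : ∀ j t', j < t' → t' < N →
      (((((H j).image π) ×ˢ ((H t').image π)).filter
          fun p => p.1 * p.2⁻¹ ∉ (H j).image π).card : ℝ)
        ≤ e^4 * (H t').card * (H j).card := by
    intro j t' hjt' ht'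
    have hjN : j < N := lt_trans hjt' ht'
    have h1 := eta_transfer π (H j) (H t') (hinj j hjN)
    have h2 : ((((H j) ×ˢ (H t')).filter fun p => p.1 * p.2⁻¹ ∉ H j).card : ℝ)
        ≤ e^4 * (H t').card * (H j).card := by
      rw [card_filter_prod_right]
      push_cast
      calc (∑ g ∈ H t', (((H j).filter fun a => a * g⁻¹ ∉ H j).card : ℝ))
          ≤ ∑ g ∈ H t', e^4 * (H j).card :=
            Finset.sum_le_sum (fun g hg => hfolH j t' hjt' ht' g hg)
        _ = e^4 * (H t').card * (H j).card := by
            rw [Finset.sum_const, nsmul_eq_mul]; ring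
    calc (((((H j).image π) ×ˢ ((H t').image π)).filter
          fun p => p.1 * p.2⁻¹ ∉ (H j).image π).card : ℝ)
        ≤ ((((H j) ×ˢ (H t')).filter fun p => p.1 * p.2⁻¹ ∉ H j).card : ℝ) := by
          exact_mod_cast h1
      _ ≤ e^4 * (H t').card * (H j).card := h2
  -- the inner (single stage) loop
  have inner : ∀ (j : ℕ), j < N → ∀ (W₀ C : Finset K),
      (∀ c ∈ C, ((((H j).image π).filter fun f => c * f ∈ W₀).card : ℝ)
        ≤ e * (H j).card) →
      ∀ (n : ℕ), ∀ (W : Finset K) (σ : K → Γ), W₀ ⊆ W →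
      (Finset.univ \ W).card ≤ n →
      (∀ q ∈ W, π (σ q) = q) →
      ((((W ×ˢ S).filter fun p =>
          ¬(p.1 * π p.2 ∈ W ∧ σ p.1 * p.2 = σ (p.1 * π p.2))).card : ℝ) * (1 - 2*e)
        ≤ (e^4 + 2*e) * S.card * W.card) →
      (∀ t', j < t' → t' < N →
        ((((Finset.univ \ W) ×ˢ ((H t').image π)).filter
            fun p => p.1 * p.2 ∈ W).card : ℝ) * (1 - 2*e)
          ≤ e^4 * (H t').card * W.card) →
      ∃ (W' : Finset K) (σ' : K → Γ), W ⊆ W' ∧ W₀ ⊆ W' ∧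
        (∀ q ∈ W', π (σ' q) = q) ∧
        ((((W' ×ˢ S).filter fun p =>
            ¬(p.1 * π p.2 ∈ W' ∧ σ' p.1 * p.2 = σ' (p.1 * π p.2))).card : ℝ) * (1 - 2*e)
          ≤ (e^4 + 2*e) * S.card * W'.card) ∧
        (∀ t', j < t' → t' < N →
          ((((Finset.univ \ W') ×ˢ ((H t').image π)).filter
              fun p => p.1 * p.2 ∈ W').card : ℝ) * (1 - 2*e)
            ≤ e^4 * (H t').card * W'.card) ∧
        (∀ c ∈ C, e * (H j).card
          < ((((H j).image π).filter fun f => c * f ∈ W' \ W₀).card : ℝ)) := by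
    intro j hjN W₀ C hC n
    induction n with
    | zero =>
      intro W σ hW₀W hn hsec hB hb
      refine ⟨W, σ, subset_rfl, hW₀W, hsec, hB, hb, ?_⟩
      -- W = univ
      have hWuniv : W = Finset.univ := by
        have h0 : (Finset.univ \ W) = ∅ := Finset.card_eq_zero.1 (Nat.le_zero.1 hn)
        have := Finset.sdiff_eq_empty_iff_subset.1 h0
        exact subset_antisymm (Finset.subset_univ W) this
      intro c hc
      have hpart : (((H j).image π).filter fun f => c * f ∈ W \ W₀).card
          + (((H j).image π).filter fun f => c * f ∈ W₀).card = ((H j).image π).card := by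
        rw [hWuniv]
        have hfe : ((H j).image π).filter (fun f => c * f ∈ Finset.univ \ W₀)
            = ((H j).image π).filter (fun f => ¬ (c * f ∈ W₀)) :=
          by ext f; simp [Finset.mem_filter, Finset.mem_sdiff]
        rw [hfe, add_comm]
        exact (Finset.card_filter_add_card_filter_not (fun f => c * f ∈ W₀))
      have hHb : (((H j).image π).card : ℝ) = (H j).card := by
        exact_mod_cast congrArg Nat.cast
          (Finset.card_image_of_injOn (fun a ha b hb hab => hinj j hjN a ha b hb hab))
      have h1 := hC c hc
      have h2 : (1:ℝ) ≤ (H j).card := hHcard j hjN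
      have : ((((H j).image π).filter fun f => c * f ∈ W \ W₀).card : ℝ)
          = ((H j).card : ℝ) - (((H j).image π).filter fun f => c * f ∈ W₀).card := by
        have := hpart
        have hcast : ((((H j).image π).filter fun f => c * f ∈ W \ W₀).card : ℝ)
            + (((H j).image π).filter fun f => c * f ∈ W₀).card
            = (((H j).image π).card : ℝ) := by exact_mod_cast this
        rw [hHb] at hcast
        linarith
      rw [this]
      nlinarith
    | succ n ih =>
      intro W σ hW₀W hn hsec hB hb
      by_cases hex : ∃ c ∈ C,
        ((((H j).image π).filter fun f => c * f ∈ W \ W₀).card : ℝ) ≤ e * (H j).card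
      · obtain ⟨c, hcC, hcadd⟩ := hex
        obtain ⟨σ', D, hD, hdisj, hcardD, hsec', hσ'W, hBstep, hbstep⟩ :=
          tile_step π hsurj S (H j) (hinj j hjN) W σ hsec c
        -- overlap bound
        have hovl : ((((H j).image π).filter fun f => c * f ∈ W).card : ℝ)
            ≤ 2 * e * (H j).card := by
          have hsubf : ((H j).image π).filter (fun f => c * f ∈ W)
              ⊆ (((H j).image π).filter fun f => c * f ∈ W₀)
                ∪ (((H j).image π).filter fun f => c * f ∈ W \ W₀) := by
            intro f hf
            simp only [Finset.mem_filter, Finset.mem_union, Finset.mem_sdiff] at hf ⊢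
            rcases Classical.em (c * f ∈ W₀) with h | h
            · exact Or.inl ⟨hf.1, h⟩
            · exact Or.inr ⟨hf.1, hf.2, h⟩
          have := Finset.card_le_card hsubf
          have h2 := Finset.card_union_le (((H j).image π).filter fun f => c * f ∈ W₀)
            (((H j).image π).filter fun f => c * f ∈ W \ W₀)
          have h3 : ((((H j).image π).filter fun f => c * f ∈ W).card : ℝ)
              ≤ (((H j).image π).filter fun f => c * f ∈ W₀).card
                + (((H j).image π).filter fun f => c * f ∈ W \ W₀).card := by
            exact_mod_cast le_trans this h2
          have := hC c hcC
          linarith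
        have hHj1 : (1:ℝ) ≤ (H j).card := hHcard j hjN
        have hDbig : (1 - 2*e) * (H j).card ≤ (D.card : ℝ) := by
          have := hcardD
          have hcast : (D.card : ℝ)
              + (((H j).image π).filter fun f => c * f ∈ W).card = (H j).card := by
            exact_mod_cast this
          linarith
        have hDpos : 1 ≤ D.card := by
          rcases Nat.eq_zero_or_pos D.card with h0 | h
          · exfalso
            rw [h0] at hDbig
            push_cast at hDbig
            nlinarith
          · exact h
        -- measure decrease
        have hmeas : (Finset.univ \ (W ∪ D)).card ≤ n := by
          have hseteq : Finset.univ \ (W ∪ D) = (Finset.univ \ W) \ D := by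
            ext x; simp only [Finset.mem_sdiff, Finset.mem_union, Finset.mem_univ,
              true_and]; tauto
          have hDsub : D ⊆ Finset.univ \ W := by
            intro x hx
            simp only [Finset.mem_sdiff, Finset.mem_univ, true_and]
            exact fun hxW => (Finset.disjoint_left.1 hdisj hxW) hx
          have := Finset.card_sdiff_add_card_eq_card hDsub
          rw [hseteq]
          omega
        -- new invariants
        have hcardW' : ((W ∪ D).card : ℝ) = (W.card : ℝ) + D.card := by
          rw [Finset.card_union_of_disjoint hdisj]; push_cast; ring
        have hB' : ((((W ∪ D) ×ˢ S).filter fun p =>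
            ¬(p.1 * π p.2 ∈ W ∪ D ∧ σ' p.1 * p.2 = σ' (p.1 * π p.2))).card : ℝ) * (1 - 2*e)
            ≤ (e^4 + 2*e) * S.card * (W ∪ D).card := by
          have hcast : ((((W ∪ D) ×ˢ S).filter fun p =>
              ¬(p.1 * π p.2 ∈ W ∪ D ∧ σ' p.1 * p.2 = σ' (p.1 * π p.2))).card : ℝ)
              ≤ (((W ×ˢ S).filter fun p =>
                  ¬(p.1 * π p.2 ∈ W ∧ σ p.1 * p.2 = σ (p.1 * π p.2))).card : ℝ)
                + (((H j) ×ˢ S).filter fun p => p.1 * p.2 ∉ H j).card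
                + S.card * ((((H j).image π).filter fun f => c * f ∈ W).card : ℝ) := by
            push_cast
            exact_mod_cast hBstep
          have h1 := hbadS j hjN
          have h2 : (S.card : ℝ) * ((((H j).image π).filter fun f => c * f ∈ W).card : ℝ)
              ≤ (S.card : ℝ) * (2 * e * (H j).card) :=
            mul_le_mul_of_nonneg_left hovl hScard
          have hκ : (0:ℝ) ≤ (e^4 + 2*e) * S.card := by positivity
          have step2 : ((((W ∪ D) ×ˢ S).filter fun p =>
              ¬(p.1 * π p.2 ∈ W ∪ D ∧ σ' p.1 * p.2 = σ' (p.1 * π p.2))).card : ℝ)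
              ≤ (((W ×ˢ S).filter fun p =>
                  ¬(p.1 * π p.2 ∈ W ∧ σ p.1 * p.2 = σ (p.1 * π p.2))).card : ℝ)
                + (e^4 + 2*e) * S.card * (H j).card := by
            calc ((((W ∪ D) ×ˢ S).filter fun p =>
                ¬(p.1 * π p.2 ∈ W ∪ D ∧ σ' p.1 * p.2 = σ' (p.1 * π p.2))).card : ℝ)
                ≤ _ := hcast
              _ ≤ (((W ×ˢ S).filter fun p =>
                  ¬(p.1 * π p.2 ∈ W ∧ σ p.1 * p.2 = σ (p.1 * π p.2))).card : ℝ)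
                + e^4 * S.card * (H j).card + S.card * (2 * e * (H j).card) := by
                  linarith
              _ = _ := by ring
          have hmul : (1 - 2*e) * (H j).card ≤ (D.card : ℝ) := hDbig
          rw [hcardW']
          have hfinal := mul_le_mul_of_nonneg_right step2 (le_of_lt he2)
          calc ((((W ∪ D) ×ˢ S).filter fun p =>
              ¬(p.1 * π p.2 ∈ W ∪ D ∧ σ' p.1 * p.2 = σ' (p.1 * π p.2))).card : ℝ) * (1-2*e)
              ≤ ((((W ×ˢ S).filter fun p =>
                  ¬(p.1 * π p.2 ∈ W ∧ σ p.1 * p.2 = σ (p.1 * π p.2))).card : ℝ)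
                + (e^4 + 2*e) * S.card * (H j).card) * (1-2*e) := hfinal
            _ = (((W ×ˢ S).filter fun p =>
                  ¬(p.1 * π p.2 ∈ W ∧ σ p.1 * p.2 = σ (p.1 * π p.2))).card : ℝ) * (1-2*e)
                + (e^4 + 2*e) * S.card * ((1 - 2*e) * (H j).card) := by ring
            _ ≤ (e^4 + 2*e) * S.card * W.card
                + (e^4 + 2*e) * S.card * (D.card : ℝ) := by
                  have := mul_le_mul_of_nonneg_left hmul hκ
                  linarith
            _ = (e^4 + 2*e) * S.card * ((W.card : ℝ) + D.card) := by ring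
        have hb' : ∀ t', j < t' → t' < N →
            ((((Finset.univ \ (W ∪ D)) ×ˢ ((H t').image π)).filter
                fun p => p.1 * p.2 ∈ W ∪ D).card : ℝ) * (1 - 2*e)
              ≤ e^4 * (H t').card * (W ∪ D).card := by
          intro t' hjt' ht'N
          have hstep := hbstep ((H t').image π)
          have hcast : ((((Finset.univ \ (W ∪ D)) ×ˢ ((H t').image π)).filter
              fun p => p.1 * p.2 ∈ W ∪ D).card : ℝ)
              ≤ ((((Finset.univ \ W) ×ˢ ((H t').image π)).filter
                  fun p => p.1 * p.2 ∈ W).card : ℝ)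
                + ((((H j).image π) ×ˢ ((H t').image π)).filter
                    fun p => p.1 * p.2⁻¹ ∉ (H j).image π).card := by
            exact_mod_cast hstep
          have h1 := hη j t' hjt' ht'N
          have hbold := hb t' hjt' ht'N
          have hκ : (0:ℝ) ≤ e^4 * (H t').card := by positivity
          rw [hcardW']
          have step2 : ((((Finset.univ \ (W ∪ D)) ×ˢ ((H t').image π)).filter
              fun p => p.1 * p.2 ∈ W ∪ D).card : ℝ)
              ≤ ((((Finset.univ \ W) ×ˢ ((H t').image π)).filter
                  fun p => p.1 * p.2 ∈ W).card : ℝ) + e^4 * (H t').card * (H j).card := by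
            linarith
          have hfinal := mul_le_mul_of_nonneg_right step2 (le_of_lt he2)
          calc ((((Finset.univ \ (W ∪ D)) ×ˢ ((H t').image π)).filter
              fun p => p.1 * p.2 ∈ W ∪ D).card : ℝ) * (1-2*e)
              ≤ (((((Finset.univ \ W) ×ˢ ((H t').image π)).filter
                  fun p => p.1 * p.2 ∈ W).card : ℝ)
                + e^4 * (H t').card * (H j).card) * (1-2*e) := hfinal
            _ = ((((Finset.univ \ W) ×ˢ ((H t').image π)).filter
                  fun p => p.1 * p.2 ∈ W).card : ℝ) * (1-2*e)
                + e^4 * (H t').card * ((1 - 2*e) * (H j).card) := by ring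
            _ ≤ e^4 * (H t').card * W.card + e^4 * (H t').card * (D.card : ℝ) := by
                  have := mul_le_mul_of_nonneg_left hDbig hκ
                  linarith
            _ = e^4 * (H t').card * ((W.card : ℝ) + D.card) := by ring
        obtain ⟨W', σ'', hWW', hW₀W', hsec'', hB'', hb'', hterm⟩ :=
          ih (W ∪ D) σ' (le_trans hW₀W Finset.subset_union_left) hmeas hsec' hB' hb'
        exact ⟨W', σ'', le_trans Finset.subset_union_left hWW', hW₀W', hsec'', hB'', hb'',
          hterm⟩
      · push_neg at hex
        exact ⟨W, σ, subset_rfl, hW₀W, hsec, hB, hb, hex⟩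
  -- outer loop
  have hKpos : (0:ℝ) < Fintype.card K := by
    have : 0 < Fintype.card K := Fintype.card_pos_iff.2 ⟨1⟩
    exact_mod_cast this
  have outer : ∀ j, j ≤ N → ∃ (W : Finset K) (σ : K → Γ),
      (∀ q ∈ W, π (σ q) = q) ∧
      ((((W ×ˢ S).filter fun p =>
          ¬(p.1 * π p.2 ∈ W ∧ σ p.1 * p.2 = σ (p.1 * π p.2))).card : ℝ) * (1 - 2*e)
        ≤ (e^4 + 2*e) * S.card * W.card) ∧
      (∀ t', j ≤ t' → t' < N →
        ((((Finset.univ \ W) ×ˢ ((H t').image π)).filter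
            fun p => p.1 * p.2 ∈ W).card : ℝ) * (1 - 2*e)
          ≤ e^4 * (H t').card * W.card) ∧
      (((Finset.univ \ W).card : ℝ)
        ≤ max (e * Fintype.card K) ((1 - e/2)^j * Fintype.card K)) := by
    intro j
    induction j with
    | zero =>
      intro _
      refine ⟨∅, fun q => (hsurj q).choose, ?_, ?_, ?_, ?_⟩
      · intro q hq; exact absurd hq (Finset.notMem_empty q)
      · rw [Finset.empty_product]
        simp
      · intro t' _ _
        simp
      · rw [Finset.sdiff_empty, Finset.card_univ, pow_zero, one_mul]
        exact le_max_right _ _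
    | succ j ihj =>
      intro hj1
      have hjN : j < N := hj1
      obtain ⟨W₀, σ₀, hsec₀, hB₀, hb₀, hV₀⟩ := ihj (le_of_lt hjN)
      by_cases hsmall : ((Finset.univ \ W₀).card : ℝ) ≤ e * Fintype.card K
      · exact ⟨W₀, σ₀, hsec₀, hB₀,
          fun t' ht1 ht2 => hb₀ t' (Nat.le_of_succ_le ht1) ht2,
          le_trans hsmall (le_max_left _ _)⟩
      · push_neg at hsmall
        set A := Finset.univ \ W₀ with hA
        set C := A.filter (fun c =>
          ((((H j).image π).filter fun f => c * f ∈ W₀).card : ℝ) ≤ e * (H j).card)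
          with hCdef
        have hCprop : ∀ c ∈ C,
            ((((H j).image π).filter fun f => c * f ∈ W₀).card : ℝ) ≤ e * (H j).card :=
          fun c hc => (Finset.mem_filter.1 hc).2
        set Cc := A.filter (fun c =>
          ¬ (((((H j).image π).filter fun f => c * f ∈ W₀).card : ℝ) ≤ e * (H j).card))
          with hCcdef
        have hHj1 : (1:ℝ) ≤ (H j).card := hHcard j hjN
        have hWK : (W₀.card : ℝ) ≤ Fintype.card K := by
          exact_mod_cast Finset.card_le_univ W₀
        -- Markov bound for |Cc|
        have hCcbound : ((Cc.card : ℝ)) * (1 - 2*e) * (e * (H j).card)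
            ≤ e^4 * (H j).card * Fintype.card K := by
          have hsum : ((A ×ˢ ((H j).image π)).filter fun p => p.1 * p.2 ∈ W₀).card
              = ∑ c ∈ A, (((H j).image π).filter fun f => c * f ∈ W₀).card :=
            card_filter_prod_left _ _ _
          have hsub : ∑ c ∈ Cc, (((H j).image π).filter fun f => c * f ∈ W₀).card
              ≤ ∑ c ∈ A, (((H j).image π).filter fun f => c * f ∈ W₀).card :=
            Finset.sum_le_sum_of_subset (Finset.filter_subset _ _)
          have hlow : (Cc.card : ℝ) * (e * (H j).card)
              ≤ ∑ c ∈ Cc, ((((H j).image π).filter fun f => c * f ∈ W₀).card : ℝ) := by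
            have := Finset.sum_le_sum (f := fun c : K => e * (H j).card)
              (g := fun c => ((((H j).image π).filter fun f => c * f ∈ W₀).card : ℝ))
              (s := Cc) ?_
            · rwa [Finset.sum_const, nsmul_eq_mul] at this
            · intro c hc
              have := (Finset.mem_filter.1 hc).2
              push_neg at this
              exact le_of_lt this
          have hbW := hb₀ j le_rfl hjN
          have hcasts : (∑ c ∈ Cc, ((((H j).image π).filter fun f => c * f ∈ W₀).card : ℝ))
              ≤ (((A ×ˢ ((H j).image π)).filter fun p => p.1 * p.2 ∈ W₀).card : ℝ) := by
            rw [hsum]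
            push_cast
            exact_mod_cast Nat.cast_le.2 hsub
          have h5 : (((A ×ˢ ((H j).image π)).filter fun p => p.1 * p.2 ∈ W₀).card : ℝ)
              * (1 - 2*e) ≤ e^4 * (H j).card * Fintype.card K := by
            calc (((A ×ˢ ((H j).image π)).filter fun p => p.1 * p.2 ∈ W₀).card : ℝ)
                * (1 - 2*e) ≤ e^4 * (H j).card * W₀.card := hbW
              _ ≤ e^4 * (H j).card * Fintype.card K := by
                  apply mul_le_mul_of_nonneg_left hWK
                  positivity
          calc ((Cc.card : ℝ)) * (1 - 2*e) * (e * (H j).card)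
              = ((Cc.card : ℝ) * (e * (H j).card)) * (1 - 2*e) := by ring
            _ ≤ (∑ c ∈ Cc, ((((H j).image π).filter fun f => c * f ∈ W₀).card : ℝ))
                * (1 - 2*e) := mul_le_mul_of_nonneg_right hlow (le_of_lt he2)
            _ ≤ (((A ×ˢ ((H j).image π)).filter fun p => p.1 * p.2 ∈ W₀).card : ℝ)
                * (1 - 2*e) := mul_le_mul_of_nonneg_right hcasts (le_of_lt he2)
            _ ≤ e^4 * (H j).card * Fintype.card K := h5
        have hsplitAC : (A.card : ℝ) = (C.card : ℝ) + Cc.card := by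
          have := Finset.card_filter_add_card_filter_not
            (s := A) (p := fun c =>
              ((((H j).image π).filter fun f => c * f ∈ W₀).card : ℝ) ≤ e * (H j).card)
          rw [← hCdef, ← hCcdef] at this
          exact_mod_cast this.symm
        -- |Cc| ≤ |A|/2
        have hCcA : (Cc.card : ℝ) ≤ (A.card : ℝ) / 2 := by
          have hHpos : (0:ℝ) < (H j).card := lt_of_lt_of_le zero_lt_one hHj1
          have hA0 : (0:ℝ) ≤ A.card := Nat.cast_nonneg _
          have h1 : (Cc.card : ℝ) * ((1 - 2*e) * e) ≤ e^4 * Fintype.card K := by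
            have h1' : ((Cc.card : ℝ) * ((1 - 2*e) * e)) * (H j).card
                ≤ (e^4 * Fintype.card K) * (H j).card := by nlinarith [hCcbound]
            exact le_of_mul_le_mul_right h1' hHpos
          have h3 : (Cc.card : ℝ) * ((1 - 2*e) * e) ≤ e^3 * A.card := by
            calc (Cc.card : ℝ) * ((1 - 2*e) * e) ≤ e^4 * Fintype.card K := h1
              _ = e^3 * (e * Fintype.card K) := by ring
              _ ≤ e^3 * A.card :=
                  mul_le_mul_of_nonneg_left (le_of_lt hsmall) (by positivity)
          have h4 : (Cc.card : ℝ) * (1 - 2*e) ≤ e^2 * A.card := by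
            have h' : ((Cc.card : ℝ) * (1 - 2*e)) * e ≤ (e^2 * A.card) * e := by
              calc ((Cc.card : ℝ) * (1 - 2*e)) * e
                  = (Cc.card : ℝ) * ((1 - 2*e) * e) := by ring
                _ ≤ e^3 * A.card := h3
                _ = (e^2 * A.card) * e := by ring
            exact le_of_mul_le_mul_right h' he0
          have hc0 : (0:ℝ) ≤ (Cc.card : ℝ) := Nat.cast_nonneg _
          have hq1 : (0:ℝ) ≤ (Cc.card : ℝ) * (1/4 - 2*e) :=
            mul_nonneg hc0 (by linarith)
          have hq2 : (0:ℝ) ≤ (A.card : ℝ) * (1/64 - e^2) :=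
            mul_nonneg hA0 (by nlinarith)
          nlinarith [h4]
        have hCA : (A.card : ℝ) ≤ 2 * C.card := by linarith
        -- run the stage
        obtain ⟨W', σ', hWW', hW₀W', hsec', hB', hb', hterm⟩ :=
          inner j hjN W₀ C hCprop A.card W₀ σ₀ subset_rfl le_rfl hsec₀ hB₀
            (fun t' ht' ht'2 => hb₀ t' (le_of_lt ht') ht'2)
        -- stage gain
        have hHbcard : (((H j).image π).card : ℝ) = (H j).card := by
          exact_mod_cast congrArg Nat.cast
            (Finset.card_image_of_injOn (fun a ha b hb hab => hinj j hjN a ha b hb hab))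
        have hgain : e * C.card ≤ ((W' \ W₀).card : ℝ) := by
          have hlow : (C.card : ℝ) * (e * (H j).card)
              ≤ ∑ c ∈ C, ((((H j).image π).filter fun f => c * f ∈ W' \ W₀).card : ℝ) := by
            have := Finset.sum_le_sum (f := fun c : K => e * (H j).card)
              (g := fun c => ((((H j).image π).filter fun f => c * f ∈ W' \ W₀).card : ℝ))
              (s := C) (fun c hc => le_of_lt (hterm c hc))
            rwa [Finset.sum_const, nsmul_eq_mul] at this
          have hup : ∑ c ∈ C, (((H j).image π).filter fun f => c * f ∈ W' \ W₀).card
              ≤ ((H j).image π).card * (W' \ W₀).card := by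
            have h1 : ∑ c ∈ C, (((H j).image π).filter fun f => c * f ∈ W' \ W₀).card
                ≤ ∑ c ∈ (Finset.univ : Finset K),
                  (((H j).image π).filter fun f => c * f ∈ W' \ W₀).card :=
              Finset.sum_le_sum_of_subset (Finset.subset_univ C)
            have h2 : ((((Finset.univ : Finset K) ×ˢ ((H j).image π)).filter
                fun p => p.1 * p.2 ∈ W' \ W₀).card)
                = ((H j).image π).card * (W' \ W₀).card := sum_translates _ _
            rw [← h2, card_filter_prod_left]
            exact h1
          have hHpos : (0:ℝ) < (H j).card := lt_of_lt_of_le zero_lt_one hHj1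
          have hcast : (C.card : ℝ) * (e * (H j).card)
              ≤ ((H j).card : ℝ) * ((W' \ W₀).card : ℝ) := by
            calc (C.card : ℝ) * (e * (H j).card) ≤ _ := hlow
              _ ≤ (((H j).image π).card : ℝ) * ((W' \ W₀).card : ℝ) := by
                  push_cast
                  exact_mod_cast Nat.cast_le.2 hup
              _ = ((H j).card : ℝ) * ((W' \ W₀).card : ℝ) := by rw [hHbcard]
          have h' : (e * (C.card : ℝ)) * (H j).card
              ≤ ((W' \ W₀).card : ℝ) * (H j).card := by
            calc (e * (C.card : ℝ)) * (H j).card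
                = (C.card : ℝ) * (e * (H j).card) := by ring
              _ ≤ ((H j).card : ℝ) * ((W' \ W₀).card : ℝ) := hcast
              _ = ((W' \ W₀).card : ℝ) * (H j).card := by ring
          exact le_of_mul_le_mul_right h' hHpos
        -- card bookkeeping
        have hcard1 : ((Finset.univ \ W').card : ℝ) + W'.card = Fintype.card K := by
          have := Finset.card_sdiff_add_card_eq_card (Finset.subset_univ W')
          rw [Finset.card_univ] at this
          exact_mod_cast this
        have hcard2 : ((Finset.univ \ W₀).card : ℝ) + W₀.card = Fintype.card K := by
          have := Finset.card_sdiff_add_card_eq_card (Finset.subset_univ W₀)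
          rw [Finset.card_univ] at this
          exact_mod_cast this
        have hcard3 : ((W' \ W₀).card : ℝ) + W₀.card = W'.card := by
          exact_mod_cast Finset.card_sdiff_add_card_eq_card hW₀W'
        have hnew : ((Finset.univ \ W').card : ℝ) ≤ (1 - e/2) * A.card := by
          have : ((Finset.univ \ W').card : ℝ) = (A.card : ℝ) - (W' \ W₀).card := by
            rw [hA]; push_cast at hcard1 hcard2 hcard3 ⊢; linarith
          rw [this]
          have : e / 2 * (A.card : ℝ) ≤ e * C.card := by nlinarith
          linarith
        refine ⟨W', σ', hsec', hB', fun t' ht1 ht2 => hb' t' ht1 ht2, ?_⟩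
        have hmono : (1 - e/2) * (A.card : ℝ)
            ≤ (1 - e/2) * max (e * Fintype.card K) ((1 - e/2)^j * Fintype.card K) := by
          apply mul_le_mul_of_nonneg_left hV₀
          linarith
        have hmax : (1 - e/2) * max (e * Fintype.card K) ((1 - e/2)^j * Fintype.card K)
            ≤ max (e * Fintype.card K) ((1 - e/2)^(j+1) * Fintype.card K) := by
          rcases max_choice (e * Fintype.card K) ((1 - e/2)^j * Fintype.card K) with h | h
          · rw [h]
            refine le_trans ?_ (le_max_left _ _)
            nlinarith
          · rw [h]
            refine le_trans (le_of_eq ?_) (le_max_right _ _)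
            rw [pow_succ]; ring
        exact le_trans hnew (le_trans hmono hmax)
  -- conclude
  obtain ⟨W, σ, hsec, hB, -, hV⟩ := outer N le_rfl
  have hVe : ((Finset.univ \ W).card : ℝ) ≤ e * Fintype.card K := by
    refine le_trans hV (max_le le_rfl ?_)
    exact mul_le_mul_of_nonneg_right (le_of_lt hN) (le_of_lt hKpos)
  classical
  set σf : K → Γ := fun q => if q ∈ W then σ q else (hsurj q).choose with hσf
  have hσfW : ∀ q ∈ W, σf q = σ q := by
    intro q hq
    simp only [hσf, if_pos hq]
  have hσfN : ∀ q, q ∉ W → σf q = (hsurj q).choose := by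
    intro q hq
    simp only [hσf, if_neg hq]
  refine ⟨σf, ?_, ?_⟩
  · intro q
    by_cases hq : q ∈ W
    · rw [hσfW q hq]
      exact hsec q hq
    · rw [hσfN q hq]
      exact (hsurj q).choose_spec
  · 
    have hsub : ((Finset.univ ×ˢ S).filter fun p => σf p.1 * p.2 ≠ σf (p.1 * π p.2))
        ⊆ ((W ×ˢ S).filter fun p =>
            ¬(p.1 * π p.2 ∈ W ∧ σ p.1 * p.2 = σ (p.1 * π p.2)))
          ∪ ((Finset.univ \ W) ×ˢ S) := by
      intro p hp
      simp only [Finset.mem_filter, Finset.mem_union, Finset.mem_product,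
        Finset.mem_sdiff, Finset.mem_univ, true_and] at hp ⊢
      obtain ⟨hs, hbad⟩ := hp
      by_cases hq : p.1 ∈ W
      · left
        refine ⟨⟨hq, hs⟩, fun hgood => hbad ?_⟩
        obtain ⟨hin, heq⟩ := hgood
        show σf p.1 * p.2 = σf (p.1 * π p.2)
        rw [hσfW _ hq, hσfW _ hin]
        exact heq
      · right; exact ⟨hq, hs⟩
    have hcard : (((Finset.univ ×ˢ S).filter
        fun p => σf p.1 * p.2 ≠ σf (p.1 * π p.2)).card : ℝ)
        ≤ (((W ×ˢ S).filter fun p =>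
            ¬(p.1 * π p.2 ∈ W ∧ σ p.1 * p.2 = σ (p.1 * π p.2))).card : ℝ)
          + ((Finset.univ \ W).card : ℝ) * S.card := by
      have h1 := Finset.card_le_card hsub
      have h2 := Finset.card_union_le ((W ×ˢ S).filter fun p =>
            ¬(p.1 * π p.2 ∈ W ∧ σ p.1 * p.2 = σ (p.1 * π p.2)))
          ((Finset.univ \ W) ×ˢ S)
      have h3 : ((Finset.univ \ W) ×ˢ S).card = (Finset.univ \ W).card * S.card :=
        Finset.card_product _ _
      have := le_trans h1 h2
      rw [h3] at this
      exact_mod_cast this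
    have hWK : (W.card : ℝ) ≤ Fintype.card K := by exact_mod_cast Finset.card_le_univ W
    have hBr : (((W ×ˢ S).filter fun p =>
        ¬(p.1 * π p.2 ∈ W ∧ σ p.1 * p.2 = σ (p.1 * π p.2))).card : ℝ)
        ≤ 4 * e * S.card * Fintype.card K := by
      have hBpos : (0:ℝ) ≤ (((W ×ˢ S).filter fun p =>
          ¬(p.1 * π p.2 ∈ W ∧ σ p.1 * p.2 = σ (p.1 * π p.2))).card : ℝ) := Nat.cast_nonneg _
      have he1 : e ≤ 1 := by linarith
      have he4 : e^4 ≤ e := by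
        calc e^4 = e^3 * e := by ring
          _ ≤ 1 * e := mul_le_mul_of_nonneg_right (pow_le_one₀ he0.le he1) he0.le
          _ = e := one_mul e
      have h1 : (e^4 + 2*e) * S.card * W.card ≤ 3 * e * S.card * Fintype.card K := by
        calc (e^4 + 2*e) * (S.card : ℝ) * W.card
            ≤ (3*e) * (S.card : ℝ) * W.card := by
              apply mul_le_mul_of_nonneg_right _ (Nat.cast_nonneg _)
              apply mul_le_mul_of_nonneg_right _ hScard
              linarith
          _ ≤ 3 * e * S.card * Fintype.card K := by
              apply mul_le_mul_of_nonneg_left hWK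
              positivity
      have h2 := le_trans hB h1
      have hq1 : (0:ℝ) ≤ (((W ×ˢ S).filter fun p =>
          ¬(p.1 * π p.2 ∈ W ∧ σ p.1 * p.2 = σ (p.1 * π p.2))).card : ℝ) * (1/4 - 2*e) :=
        mul_nonneg hBpos (by linarith)
      nlinarith
    calc (((Finset.univ ×ˢ S).filter
        fun p => σf p.1 * p.2 ≠ σf (p.1 * π p.2)).card : ℝ)
        ≤ _ := hcard
      _ ≤ 4 * e * S.card * Fintype.card K + (e * Fintype.card K) * S.card := by
          have := mul_le_mul_of_nonneg_right hVe hScard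
          linarith
      _ = 5 * e * S.card * Fintype.card K := by ring

end WeissAux

set_option maxHeartbeats 1600000 in
/-- **B. Weiss's theorem.** Let `Γ` be an amenable group generated by a finite set
`S` and `(Γₙ)` a normal chain with trivial intersection. For every `ε > 0` there is
`k` and a transversal `T` of `Γₖ` in `Γ` with `|TS \ T| < ε|T|`. -/
theorem weiss_transversal {Γ : Type*} [Group Γ] [DecidableEq Γ]
    (S : Finset Γ) (hS : Subgroup.closure (S : Set Γ) = ⊤)
    (hamen : ∀ δ : ℝ, 0 < δ → ∃ A : Finset Γ, A.Nonempty ∧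
      ((((S ×ˢ A).filter fun p => p.1 * p.2 ∉ A).card : ℝ) ≤ δ * S.card * A.card))
    (Γc : ℕ → Subgroup Γ) (hnorm : ∀ n, (Γc n).Normal)
    (hchain : ∀ n, Γc (n + 1) ≤ Γc n) (hfi : ∀ n, (Γc n).FiniteIndex)
    (hint : (⨅ n, Γc n) = ⊥) :
    ∀ ε : ℝ, 0 < ε → ∃ (k : ℕ) (T : Finset Γ),
      (∀ g : Γ, ∃! t, t ∈ T ∧ t⁻¹ * g ∈ Γc k) ∧
      (((T * S) \ T).card : ℝ) < ε * T.card := by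
  intro ε hε
  classical
  by_cases htriv : ∀ g : Γ, g = 1
  · refine ⟨0, {1}, ?_, ?_⟩
    · intro g
      refine ⟨1, ⟨Finset.mem_singleton_self 1, ?_⟩, ?_⟩
      · have h1 : (1:Γ)⁻¹ * g = 1 := by rw [htriv g]; group
        rw [h1]
        exact (Γc 0).one_mem
      · intro t ht
        exact Finset.mem_singleton.1 ht.1
    · have hT : (({1} : Finset Γ) * S) \ {1} = ∅ := by
        apply Finset.eq_empty_of_forall_notMem
        intro x hx
        rcases Finset.mem_sdiff.1 hx with ⟨-, hx2⟩
        exact hx2 (Finset.mem_singleton.2 (htriv x))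
      rw [hT]
      simp only [Finset.card_empty, Finset.card_singleton, Nat.cast_zero, Nat.cast_one,
        mul_one]
      exact hε
  · push_neg at htriv
    obtain ⟨g₀, hg₀⟩ := htriv
    have hSne : S.Nonempty := by
      rcases Finset.eq_empty_or_nonempty S with rfl | h
      · exfalso
        rw [Finset.coe_empty, Subgroup.closure_empty] at hS
        have : g₀ ∈ (⊥ : Subgroup Γ) := by rw [hS]; trivial
        exact hg₀ (Subgroup.mem_bot.1 this)
      · exact h
    have hScard1 : (1:ℝ) ≤ S.card := by exact_mod_cast Finset.card_pos.2 hSne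
    -- per-letter Folner bound
    have hamen' : ∀ δ : ℝ, 0 < δ → ∃ A : Finset Γ, A.Nonempty ∧
        ∀ s ∈ S, ((A.filter fun a => s * a ∉ A).card : ℝ) ≤ δ * S.card * A.card := by
      intro δ hδ
      obtain ⟨A, hAne, hA⟩ := hamen δ hδ
      refine ⟨A, hAne, fun s hs => ?_⟩
      have hsum : ((S ×ˢ A).filter fun p => p.1 * p.2 ∉ A).card
          = ∑ t ∈ S, (A.filter fun a => t * a ∉ A).card := card_filter_prod_left _ _ _
      have hle : (A.filter fun a => s * a ∉ A).card
          ≤ ((S ×ˢ A).filter fun p => p.1 * p.2 ∉ A).card := by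
        rw [hsum]
        exact Finset.single_le_sum (f := fun t => (A.filter fun a => t * a ∉ A).card)
          (fun _ _ => Nat.zero_le _) hs
      exact le_trans (Nat.cast_le.2 hle) hA
    -- symmetry
    have hsymm : ∀ (A : Finset Γ) (g : Γ),
        (A.filter fun a => g * a ∉ A).card = (A.filter fun a => g⁻¹ * a ∉ A).card := by
      intro A g
      have h1 : (A.filter fun a => g * a ∈ A).card
          = (A.filter fun a => g⁻¹ * a ∈ A).card := by
        refine Finset.card_bij' (fun a _ => g * a) (fun b _ => g⁻¹ * b) ?_ ?_ ?_ ?_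
        · intro a ha
          simp only [Finset.mem_filter] at ha ⊢
          constructor
          · exact ha.2
          · have : g⁻¹ * (g * a) = a := by group
            rw [this]; exact ha.1
        · intro b hb
          simp only [Finset.mem_filter] at hb ⊢
          constructor
          · exact hb.2
          · have : g * (g⁻¹ * b) = b := by group
            rw [this]; exact hb.1
        · intro a _; group
        · intro b _; group
      have e1 := Finset.card_filter_add_card_filter_not
        (s := A) (p := fun a => g * a ∈ A)
      have e2 := Finset.card_filter_add_card_filter_not
        (s := A) (p := fun a => g⁻¹ * a ∈ A)
      omega
    -- subadditivity
    have hsubadd : ∀ (A : Finset Γ) (g h : Γ),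
        (A.filter fun a => (g * h) * a ∉ A).card
          ≤ (A.filter fun a => g * a ∉ A).card + (A.filter fun a => h * a ∉ A).card := by
      intro A g h
      have hsub : A.filter (fun a => (g * h) * a ∉ A)
          ⊆ (A.filter fun a => h * a ∈ A ∧ g * (h * a) ∉ A)
            ∪ (A.filter fun a => h * a ∉ A) := by
        intro a ha
        simp only [Finset.mem_filter, Finset.mem_union] at ha ⊢
        by_cases hh : h * a ∈ A
        · refine Or.inl ⟨ha.1, hh, ?_⟩
          have : g * (h * a) = (g * h) * a := by group
          rw [this]; exact ha.2
        · exact Or.inr ⟨ha.1, hh⟩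
      refine le_trans (Finset.card_le_card hsub) ?_
      refine le_trans (Finset.card_union_le _ _) ?_
      have h2 : (A.filter fun a => h * a ∈ A ∧ g * (h * a) ∉ A).card
          ≤ (A.filter fun a => g * a ∉ A).card := by
        apply Finset.card_le_card_of_injOn (fun a => h * a)
        · intro a ha
          simp only [Finset.mem_coe, Finset.mem_filter] at ha ⊢
          exact ⟨ha.2.1, ha.2.2⟩
        · intro a _ b _ hab
          exact mul_left_cancel hab
      omega
    -- words
    have hword : ∀ g : Γ, ∃ l : List Γ, (∀ x ∈ l, x ∈ S ∨ x⁻¹ ∈ S) ∧ l.prod = g := by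
      intro g
      have hg : g ∈ Submonoid.closure ((S : Set Γ) ∪ (S : Set Γ)⁻¹) := by
        rw [← Subgroup.closure_toSubmonoid]
        simp [hS]
      obtain ⟨l, hl, hp⟩ := Submonoid.exists_list_of_mem_closure hg
      refine ⟨l, fun x hx => ?_, hp⟩
      rcases hl x hx with h | h
      · exact Or.inl h
      · exact Or.inr (by simpa using h)
    -- left Folner for arbitrary finite sets
    have lemA : ∀ (E : Finset Γ) (δ : ℝ), 0 < δ → ∃ A : Finset Γ, A.Nonempty ∧
        ∀ g ∈ E, ((A.filter fun a => g * a ∉ A).card : ℝ) ≤ δ * A.card := by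
      intro E δ hδ
      set L : ℕ := E.sup (fun g => (hword g).choose.length) + 1 with hLdef
      have hL1 : (1:ℝ) ≤ L := by exact_mod_cast Nat.succ_le_succ (Nat.zero_le _)
      have hLpos : (0:ℝ) < (L : ℝ) * S.card := by
        have : (0:ℝ) < (L:ℝ) := lt_of_lt_of_le zero_lt_one hL1
        nlinarith
      set δ' : ℝ := δ / ((L : ℝ) * S.card) with hδ'def
      have hδ' : 0 < δ' := div_pos hδ hLpos
      obtain ⟨A, hAne, hA⟩ := hamen' δ' hδ'
      refine ⟨A, hAne, fun g hg => ?_⟩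
      have hletter : ∀ x : Γ, (x ∈ S ∨ x⁻¹ ∈ S) →
          ((A.filter fun a => x * a ∉ A).card : ℝ) ≤ δ' * S.card * A.card := by
        intro x hx
        rcases hx with hx | hx
        · exact hA x hx
        · rw [hsymm A x]
          exact hA x⁻¹ hx
      have hlist : ∀ l : List Γ, (∀ x ∈ l, x ∈ S ∨ x⁻¹ ∈ S) →
          ((A.filter fun a => l.prod * a ∉ A).card : ℝ)
            ≤ l.length * (δ' * S.card * A.card) := by
        intro l
        induction l with
        | nil =>
          intro _
          have hempty : A.filter (fun a => (List.prod []) * a ∉ A) = ∅ := by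
            apply Finset.filter_false_of_mem
            intro a ha
            simp only [List.prod_nil, one_mul]
            exact fun h => h ha
          rw [hempty]
          simp
        | cons x l ihl =>
          intro hall
          have hx := hall x (List.mem_cons_self (a := x) (l := l))
          have hl := fun y hy => hall y (List.mem_cons_of_mem x hy)
          have h1 := hsubadd A x l.prod
          rw [List.prod_cons]
          have hc : ((A.filter fun a => (x * l.prod) * a ∉ A).card : ℝ)
              ≤ ((A.filter fun a => x * a ∉ A).card : ℝ)
                + ((A.filter fun a => l.prod * a ∉ A).card : ℝ) := by
            exact_mod_cast h1
          have h2 := hletter x hx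
          have h3 := ihl hl
          simp only [List.length_cons]
          push_cast
          linarith
      obtain ⟨hl1, hl2⟩ := (hword g).choose_spec
      have hlen : ((hword g).choose.length : ℝ) ≤ L := by
        have hsup : (hword g).choose.length ≤ E.sup (fun g => (hword g).choose.length) :=
          Finset.le_sup (f := fun g => (hword g).choose.length) hg
        have h2 : (hword g).choose.length ≤ L := by
          rw [hLdef]
          exact le_trans hsup (Nat.le_succ _)
        exact_mod_cast h2
      have := hlist (hword g).choose hl1
      rw [hl2] at this
      refine le_trans this ?_
      have hA0 : (0:ℝ) ≤ A.card := Nat.cast_nonneg _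
      have hS0 : (0:ℝ) ≤ S.card := Nat.cast_nonneg _
      have hδS : (0:ℝ) ≤ δ' * S.card * A.card := mul_nonneg (mul_nonneg hδ'.le hS0) hA0
      calc ((hword g).choose.length : ℝ) * (δ' * S.card * A.card)
          ≤ (L : ℝ) * (δ' * S.card * A.card) := mul_le_mul_of_nonneg_right hlen hδS
        _ = δ * A.card := by
            rw [hδ'def]
            rw [show (L:ℝ) * (δ / (L * S.card) * S.card * A.card)
              = δ / (L * S.card) * (L * S.card) * A.card by ring, div_mul_cancel₀ _ hLpos.ne']
    -- right Folner version
    have lemR : ∀ (E : Finset Γ) (δ : ℝ), 0 < δ → ∃ B : Finset Γ, B.Nonempty ∧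
        ∀ g ∈ E, ((B.filter fun b => b * g ∉ B).card : ℝ) ≤ δ * B.card := by
      intro E δ hδ
      obtain ⟨A, hAne, hA⟩ := lemA (E.image (·⁻¹)) δ hδ
      refine ⟨A.image (·⁻¹), hAne.image _, fun g hg => ?_⟩
      have hcardeq : (A.image (·⁻¹)).card = A.card :=
        Finset.card_image_of_injective _ inv_injective
      have hmeminv : ∀ x : Γ, x ∈ A.image (·⁻¹) ↔ x⁻¹ ∈ A := by
        intro x
        simp only [Finset.mem_image]
        constructor
        · rintro ⟨a, ha, rfl⟩; simpa using ha
        · intro h; exact ⟨x⁻¹, h, by group⟩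
      have hfe : ((A.image (·⁻¹)).filter fun b => b * g ∉ A.image (·⁻¹)).card
          = (A.filter fun a => g⁻¹ * a ∉ A).card := by
        refine Finset.card_bij' (fun b _ => b⁻¹) (fun a _ => a⁻¹) ?_ ?_ ?_ ?_
        · intro b hb
          simp only [Finset.mem_filter] at hb ⊢
          obtain ⟨hb1, hb2⟩ := hb
          refine ⟨(hmeminv b).1 hb1, fun hmem => hb2 ?_⟩
          rw [hmeminv]
          have : (b * g)⁻¹ = g⁻¹ * b⁻¹ := by group
          rw [this]
          exact hmem
        · intro a ha
          simp only [Finset.mem_filter] at ha ⊢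
          obtain ⟨ha1, ha2⟩ := ha
          constructor
          · rw [hmeminv]; simpa using ha1
          · intro hmem
            apply ha2
            have := (hmeminv _).1 hmem
            have heq : (a⁻¹ * g)⁻¹ = g⁻¹ * a := by group
            rwa [heq] at this
        · intro b _; group
        · intro a _; group
      rw [hfe, hcardeq]
      exact hA g⁻¹ (Finset.mem_image_of_mem _ hg)
    -- choose epsilon
    set e : ℝ := min (1/8) (ε / (1 + 5 * S.card)) with hedef
    have he0 : 0 < e := lt_min (by norm_num) (div_pos hε (by linarith [hScard1]))
    have he8 : e ≤ 1/8 := min_le_left _ _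
    have hδ4 : (0:ℝ) < e^4 := pow_pos he0 4
    choose Φ hΦne hΦbd using fun E => lemR E (e^4) hδ4
    obtain ⟨N, hN⟩ := exists_pow_lt_of_lt_one he0 (by linarith : (1:ℝ) - e/2 < 1)
    -- shapes
    set GA : ℕ → Finset Γ × Finset Γ := fun n =>
      Nat.rec ((∅ : Finset Γ), S) (fun _ p => (Φ p.2, p.2 ∪ (Φ p.2)⁻¹)) n with hGA
    have hGAsucc : ∀ n, GA (n+1) = (Φ (GA n).2, (GA n).2 ∪ (Φ (GA n).2)⁻¹) :=
      fun n => rfl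
    have hmono' : ∀ m n, m ≤ n → (GA m).2 ⊆ (GA n).2 := by
      intro m n hmn
      induction hmn with
      | refl => exact subset_rfl
      | @step n' hn' ih =>
        refine le_trans ih ?_
        rw [hGAsucc n']
        exact Finset.subset_union_left
    have hSsub : ∀ n, S ⊆ (GA n).2 := by
      intro n
      have h0 : (GA 0).2 = S := rfl
      rw [← h0]
      exact hmono' 0 n (Nat.zero_le n)
    have hinvsub : ∀ i n, i + 1 ≤ n → ((GA (i+1)).1)⁻¹ ⊆ (GA n).2 := by
      intro i n h
      refine le_trans ?_ (hmono' (i+1) n h)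
      rw [hGAsucc i]
      exact Finset.subset_union_right
    set Hs : ℕ → Finset Γ := fun t => (GA (N - t)).1 with hHs
    have hHeq : ∀ t, t < N → Hs t = Φ ((GA (N - t - 1)).2) := by
      intro t ht
      show (GA (N - t)).1 = _
      have hnt : N - t = (N - t - 1) + 1 := by omega
      rw [hnt, hGAsucc]
      rfl

    have hHne : ∀ t, t < N → (Hs t).Nonempty := by
      intro t ht; rw [hHeq t ht]; exact hΦne _
    have hHfolS : ∀ t, t < N → ∀ s ∈ S,
        (((Hs t).filter fun a => a * s ∉ Hs t).card : ℝ) ≤ e^4 * (Hs t).card := by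
      intro t ht s hs
      rw [hHeq t ht]
      exact hΦbd _ s (hSsub _ hs)
    have hHfolH : ∀ t t', t < t' → t' < N → ∀ g ∈ Hs t',
        (((Hs t).filter fun a => a * g⁻¹ ∉ Hs t).card : ℝ) ≤ e^4 * (Hs t).card := by
      intro t t' htt' ht'N g hg
      rw [hHeq t (lt_trans htt' ht'N)]
      apply hΦbd _ g⁻¹
      have hginv : g⁻¹ ∈ ((GA (N - t')).1)⁻¹ := by
        rw [hHs] at hg
        exact Finset.inv_mem_inv hg
      have hrw : N - t' = (N - t' - 1) + 1 := by omega
      rw [hrw] at hginv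
      refine hinvsub (N - t' - 1) (N - t - 1) (by omega) hginv
    -- choose k
    have hanti : Antitone Γc := antitone_nat_of_succ_le hchain
    set Dset : Finset Γ :=
      ((Finset.range N).biUnion fun t => (Hs t)⁻¹ * Hs t).erase 1 with hDset
    have h1D : (1:Γ) ∉ Dset := Finset.notMem_erase _ _
    have hknot : ∃ k, ∀ g ∈ Dset, g ∉ Γc k := by
      have hex : ∀ g ∈ Dset, ∃ n, g ∉ Γc n := by
        intro g hg
        by_contra hcon
        push_neg at hcon
        have hginf : g ∈ ⨅ n, Γc n := Subgroup.mem_iInf.2 hcon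
        rw [hint] at hginf
        have : g = 1 := Subgroup.mem_bot.1 hginf
        exact h1D (this ▸ hg)
      choose! f hf using hex
      refine ⟨Dset.sup f, fun g hg hgk => hf g hg (hanti (Finset.le_sup hg) hgk)⟩
    obtain ⟨k, hk⟩ := hknot
    -- quotient setup
    haveI := hnorm k
    haveI := hfi k
    haveI : Fintype (Γ ⧸ Γc k) := Fintype.ofFinite _
    set π : Γ →* Γ ⧸ Γc k := QuotientGroup.mk' (Γc k) with hπdef
    have hsurj : Function.Surjective π := QuotientGroup.mk'_surjective _
    have hπinj : ∀ t, t < N → ∀ a ∈ Hs t, ∀ b ∈ Hs t, π a = π b → a = b := by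
      intro t ht a ha b hb hab
      by_contra hne'
      have hmem : a⁻¹ * b ∈ Dset := by
        rw [hDset]
        refine Finset.mem_erase.2 ⟨fun h => hne' (inv_mul_eq_one.1 h), ?_⟩
        refine Finset.mem_biUnion.2 ⟨t, Finset.mem_range.2 ht, ?_⟩
        exact Finset.mul_mem_mul (Finset.inv_mem_inv ha) hb
      have habq : (a : Γ ⧸ Γc k) = b := hab
      exact hk _ hmem (QuotientGroup.eq.1 habq)
    obtain ⟨σ, hσsec, hσbad⟩ :=
      weiss_master π hsurj S e he0 he8 N Hs hHne hπinj hHfolS hHfolH hN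
    set T : Finset Γ := Finset.image σ Finset.univ with hTdef
    have hσinj : Function.Injective σ := by
      intro q q' h
      have := congrArg π h
      rwa [hσsec, hσsec] at this
    have hTcard : T.card = Fintype.card (Γ ⧸ Γc k) := by
      rw [hTdef, Finset.card_image_of_injective _ hσinj, Finset.card_univ]
    refine ⟨k, T, ?_, ?_⟩
    · intro g
      refine ⟨σ (π g), ⟨Finset.mem_image_of_mem σ (Finset.mem_univ _), ?_⟩, ?_⟩
      · have h := hσsec (π g)
        exact QuotientGroup.eq.1 h
      · rintro t ⟨htT, htg⟩
        obtain ⟨q, -, rfl⟩ := Finset.mem_image.1 htT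
        have hq' : (↑(σ q) : Γ ⧸ Γc k) = ↑g := QuotientGroup.eq.2 htg
        have hq : q = π g := by rw [← hσsec q]; exact hq'
        rw [hq]
    · have hsubTS : (T * S) \ T ⊆ ((Finset.univ ×ˢ S).filter
          fun p => σ p.1 * p.2 ≠ σ (p.1 * π p.2)).image (fun p => σ p.1 * p.2) := by
        intro x hx
        obtain ⟨hxTS, hxT⟩ := Finset.mem_sdiff.1 hx
        obtain ⟨t, htT, s, hsS, rfl⟩ := Finset.mem_mul.1 hxTS
        obtain ⟨q, -, rfl⟩ := Finset.mem_image.1 htT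
        refine Finset.mem_image.2 ⟨(q, s), ?_, rfl⟩
        refine Finset.mem_filter.2 ⟨Finset.mem_product.2 ⟨Finset.mem_univ _, hsS⟩, ?_⟩
        intro heq
        apply hxT
        rw [heq]
        exact Finset.mem_image_of_mem σ (Finset.mem_univ _)
      have hcards : (((T * S) \ T).card : ℝ)
          ≤ 5 * e * S.card * Fintype.card (Γ ⧸ Γc k) := by
        refine le_trans ?_ hσbad
        have h1 := Finset.card_le_card hsubTS
        have h2 := Finset.card_image_le (s := (Finset.univ ×ˢ S).filter
          fun p => σ p.1 * p.2 ≠ σ (p.1 * π p.2)) (f := fun p => σ p.1 * p.2)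
        exact_mod_cast le_trans h1 h2
      have hKT : (Fintype.card (Γ ⧸ Γc k) : ℝ) = T.card := by exact_mod_cast hTcard.symm
      have hfin : 5 * e * S.card < ε := by
        have h1 : e ≤ ε / (1 + 5 * S.card) := min_le_right _ _
        have hpos : (0:ℝ) < 1 + 5 * S.card := by linarith [hScard1]
        have h2 : e * (1 + 5 * S.card) ≤ ε := by
          rw [← le_div_iff₀ hpos]
          exact h1
        have h3 : 5 * e * (S.card : ℝ) = e * (1 + 5 * S.card) - e := by ring
        linarith
      have hTpos : (0:ℝ) < T.card := by
        rw [← hKT]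
        have : 0 < Fintype.card (Γ ⧸ Γc k) := Fintype.card_pos_iff.2 ⟨1⟩
        exact_mod_cast this
      calc (((T * S) \ T).card : ℝ)
          ≤ 5 * e * S.card * T.card := by rw [← hKT]; exact hcards
        _ < ε * T.card := mul_lt_mul_of_pos_right hfin hTpos
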